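/- Let n ≥ 2 be an integer and let a_1 < a_2 be positive integers. A point (c_1, c_2) ∈ ℝ² lies in the image of the nonnegative orthant ℝ^n_{≥0} under the power sum map x ↦ (Σ_{i=1}^n x_i^{a_1}, Σ_{i=1}^n x_i^{a_2}) if and only if c_1 ≥ 0, c_2 ≥ 0, and c_2^{a_1} ≤ c_1^{a_2} ≤ n^{a_2 − a_1} · c_2^{a_1}. -/

import Mathlib

/-- For `n ≥ 2` and positive exponents `a₁ < a₂`, a point `(c₁,c₂) ∈ ℝ²` lies in
the image of the nonnegative orthant `ℝ^n_{≥0}` under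
`x ↦ (∑_i x_i^{a₁}, ∑_i x_i^{a₂})` if and only if `c₁ ≥ 0`, `c₂ ≥ 0` and
`c₂^{a₁} ≤ c₁^{a₂} ≤ n^{a₂−a₁} c₂^{a₁}`. -/
theorem powerSum_nonneg_image_two_norms
    (n : ℕ) (hn : 2 ≤ n) (a₁ a₂ : ℕ) (h₀ : 0 < a₁) (h₁₂ : a₁ < a₂)
    (c₁ c₂ : ℝ) :
    (∃ x : Fin n → ℝ, (∀ i, 0 ≤ x i) ∧
        (∑ i : Fin n, x i ^ a₁) = c₁ ∧ (∑ i : Fin n, x i ^ a₂) = c₂) ↔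
      (0 ≤ c₁ ∧ 0 ≤ c₂ ∧ c₂ ^ a₁ ≤ c₁ ^ a₂ ∧
        c₁ ^ a₂ ≤ (n : ℝ) ^ (a₂ - a₁) * c₂ ^ a₁) := by
  haveI : NeZero n := ⟨by omega⟩
  have ha₁R : (a₁ : ℝ) ≠ 0 := Nat.cast_ne_zero.2 h₀.ne'
  have hnR : (0 : ℝ) < n := by positivity
  set r : ℝ := (a₂ : ℝ) / (a₁ : ℝ) with hrdef
  have ha₂R : (0:ℝ) < (a₂ : ℝ) := by exact_mod_cast h₀.trans h₁₂
  have hr0 : 0 < r := div_pos ha₂R (by exact_mod_cast h₀)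
  have hr1 : 1 ≤ r := by
    rw [hrdef, le_div_iff₀ (by exact_mod_cast h₀), one_mul]
    exact_mod_cast h₁₂.le
  have hmul : (a₁ : ℝ) * r = (a₂ : ℝ) := by
    rw [hrdef, mul_div_cancel₀ _ ha₁R]
  have keyA : ∀ y : ℝ, 0 ≤ y → ((y ^ a₁ : ℝ) ^ r) = y ^ a₂ := by
    intro y hy
    rw [← Real.rpow_natCast y a₁, ← Real.rpow_mul hy, hmul, Real.rpow_natCast]
  have keyB : ∀ y : ℝ, 0 ≤ y → ((y ^ r) ^ a₁) = y ^ a₂ := by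
    intro y hy
    rw [← Real.rpow_natCast (y ^ r) a₁, ← Real.rpow_mul hy,
      show r * (a₁ : ℝ) = (a₂ : ℝ) by rw [mul_comm]; exact hmul, Real.rpow_natCast]
  have keyC : ∀ y : ℝ, 0 ≤ y → ((y ^ ((a₁ : ℝ)⁻¹)) ^ a₁) = y := by
    intro y hy
    rw [← Real.rpow_natCast (y ^ ((a₁:ℝ)⁻¹)) a₁, ← Real.rpow_mul hy,
      inv_mul_cancel₀ ha₁R, Real.rpow_one]
  have keyD : ∀ y : ℝ, 0 ≤ y → ((y ^ ((a₁ : ℝ)⁻¹)) ^ a₂) = y ^ r := by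
    intro y hy
    rw [← Real.rpow_natCast (y ^ ((a₁:ℝ)⁻¹)) a₂, ← Real.rpow_mul hy,
      inv_mul_eq_div]
  have hsplit : (n : ℝ) ^ a₂ = (n : ℝ) ^ (a₂ - a₁) * (n : ℝ) ^ a₁ := by
    rw [← pow_add]; congr 1; omega
  constructor
  · rintro ⟨x, hx, h1, h2⟩
    have hc1 : 0 ≤ c₁ := h1 ▸ Finset.sum_nonneg fun i _ => pow_nonneg (hx i) _
    have hc2 : 0 ≤ c₂ := h2 ▸ Finset.sum_nonneg fun i _ => pow_nonneg (hx i) _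
    refine ⟨hc1, hc2, ?_, ?_⟩
    · -- c₂ ^ a₁ ≤ c₁ ^ a₂ via max element
      obtain ⟨i₀, -, hi₀⟩ := Finset.exists_max_image Finset.univ x ⟨0, Finset.mem_univ _⟩
      set M := x i₀ with hM
      have hM0 : 0 ≤ M := hx i₀
      have hMc : M ^ a₁ ≤ c₁ := h1 ▸ Finset.single_le_sum
        (fun i _ => pow_nonneg (hx i) _) (Finset.mem_univ i₀)
      have hstep : c₂ ≤ c₁ * M ^ (a₂ - a₁) := by
        rw [← h1, ← h2, Finset.sum_mul]
        refine Finset.sum_le_sum fun i _ => ?_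
        calc x i ^ a₂ = x i ^ a₁ * x i ^ (a₂ - a₁) := by
              rw [← pow_add]; congr 1; omega
          _ ≤ x i ^ a₁ * M ^ (a₂ - a₁) := by
              exact mul_le_mul_of_nonneg_left
                (pow_le_pow_left₀ (hx i) (hi₀ i (Finset.mem_univ i)) _)
                (pow_nonneg (hx i) _)
      calc c₂ ^ a₁ ≤ (c₁ * M ^ (a₂ - a₁)) ^ a₁ := pow_le_pow_left₀ hc2 hstep _
        _ = c₁ ^ a₁ * (M ^ a₁) ^ (a₂ - a₁) := by rw [mul_pow, ← pow_mul, ← pow_mul,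
              Nat.mul_comm]
        _ ≤ c₁ ^ a₁ * c₁ ^ (a₂ - a₁) :=
            mul_le_mul_of_nonneg_left (pow_le_pow_left₀ (pow_nonneg hM0 _) hMc _)
              (pow_nonneg hc1 _)
        _ = c₁ ^ a₂ := by rw [← pow_add]; congr 1; omega
    · -- power mean inequality
      have hw' : ∑ _i : Fin n, ((n : ℝ))⁻¹ = 1 := by
        rw [Finset.sum_const, Finset.card_univ, Fintype.card_fin, nsmul_eq_mul,
          mul_inv_cancel₀ hnR.ne']
      have key := Real.rpow_arith_mean_le_arith_mean_rpow Finset.univ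
        (fun _ : Fin n => (n : ℝ)⁻¹) (fun i => x i ^ a₁)
        (fun i _ => by positivity) hw' (fun i _ => pow_nonneg (hx i) _) hr1
      rw [← Finset.mul_sum, ← Finset.mul_sum] at key
      have hrw : ∀ i : Fin n, ((x i ^ a₁ : ℝ) ^ r) = x i ^ a₂ := fun i => keyA _ (hx i)
      rw [Finset.sum_congr rfl (fun i _ => hrw i), h1, h2, inv_mul_eq_div,
        inv_mul_eq_div] at key
      -- key : (c₁ / n) ^ r ≤ c₂ / n
      have k2 : (c₁ / n) ^ a₂ ≤ (c₂ / n) ^ a₁ := by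
        rw [← keyB (c₁ / n) (by positivity)]
        exact pow_le_pow_left₀ (Real.rpow_nonneg (by positivity) _) key _
      rw [div_pow, div_pow, div_le_div_iff₀ (by positivity) (by positivity), hsplit] at k2
      have k3 : c₁ ^ a₂ * (n : ℝ) ^ a₁ ≤ ((n : ℝ) ^ (a₂ - a₁) * c₂ ^ a₁) * (n : ℝ) ^ a₁ := by
        calc c₁ ^ a₂ * (n : ℝ) ^ a₁ ≤ c₂ ^ a₁ * ((n : ℝ) ^ (a₂ - a₁) * (n : ℝ) ^ a₁) := k2
          _ = ((n : ℝ) ^ (a₂ - a₁) * c₂ ^ a₁) * (n : ℝ) ^ a₁ := by ring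
      exact le_of_mul_le_mul_right k3 (by positivity)
  · rintro ⟨hc1, hc2, h3, h4⟩
    rcases eq_or_lt_of_le hc1 with hc1' | hc1'
    · -- c₁ = 0, hence c₂ = 0
      have hc2' : c₂ = 0 := by
        have : c₂ ^ a₁ ≤ 0 := by rw [← hc1'] at h3; simpa [zero_pow (show a₂ ≠ 0 by omega)] using h3
        have h0 : c₂ ^ a₁ = 0 := le_antisymm this (pow_nonneg hc2 _)
        exact pow_eq_zero_iff h₀.ne' |>.1 h0
      exact ⟨fun _ => 0, fun i => le_rfl, by
        simp [zero_pow h₀.ne', ← hc1'], by simp [zero_pow (show a₂ ≠ 0 by omega), hc2']⟩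
    · -- c₁ > 0 : construct via IVT
      set m : ℝ := (n : ℝ) - 1 with hmdef
      have hm0 : 0 < m := by
        rw [hmdef]; have : (2 : ℝ) ≤ n := by exact_mod_cast hn
        linarith
      set g : ℝ → ℝ := fun p => (p * c₁) ^ r + m * (((1 - p) * c₁) / m) ^ r with hgdef
      have hgc : Continuous g := by
        apply Continuous.add
        · exact (continuous_id.mul continuous_const).rpow_const fun x => Or.inr hr0.le
        · exact continuous_const.mul
            ((((continuous_const.sub continuous_id).mul continuous_const).div_const m).rpow_const
              fun x => Or.inr hr0.le)
      have hg1 : g 1 = c₁ ^ r := by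
        simp [hgdef, Real.zero_rpow hr0.ne']
      have hgn : g (1 / n) = (n : ℝ) * (c₁ / n) ^ r := by
        have e1 : (1 / (n : ℝ)) * c₁ = c₁ / n := by ring
        have e2 : ((1 - 1 / (n : ℝ)) * c₁) / m = c₁ / n := by
          rw [hmdef]; have hm' : (n:ℝ) - 1 ≠ 0 := by linarith
          field_simp
        rw [hgdef]; simp only [e1, e2]
        rw [hmdef]; ring
      have hlow : g (1 / n) ≤ c₂ := by
        rw [hgn]
        refine (pow_le_pow_iff_left₀ (by positivity) hc2 h₀.ne').1 ?_
        rw [mul_pow, keyB (c₁ / n) (by positivity), div_pow]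
        rw [← mul_div_assoc, div_le_iff₀ (by positivity)]
        calc (n : ℝ) ^ a₁ * c₁ ^ a₂
            ≤ (n : ℝ) ^ a₁ * ((n : ℝ) ^ (a₂ - a₁) * c₂ ^ a₁) :=
              mul_le_mul_of_nonneg_left h4 (by positivity)
          _ = c₂ ^ a₁ * (n : ℝ) ^ a₂ := by rw [hsplit]; ring
      have hhigh : c₂ ≤ g 1 := by
        rw [hg1]
        refine (pow_le_pow_iff_left₀ hc2 (Real.rpow_nonneg hc1 _) h₀.ne').1 ?_
        rw [keyB c₁ hc1]
        exact h3
      have hIcc : (1 : ℝ) / n ≤ 1 := by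
        rw [div_le_one hnR]; exact_mod_cast by omega
      obtain ⟨p, hp, hgp⟩ := intermediate_value_Icc hIcc hgc.continuousOn ⟨hlow, hhigh⟩
      have hp0 : 0 < p := lt_of_lt_of_le (by positivity) hp.1
      have hp1 : p ≤ 1 := hp.2
      -- the witness
      set A : ℝ := (p * c₁) ^ ((a₁ : ℝ)⁻¹) with hAdef
      set B : ℝ := (((1 - p) * c₁) / m) ^ ((a₁ : ℝ)⁻¹) with hBdef
      have hpc : 0 ≤ p * c₁ := by positivity
      have hqc : 0 ≤ ((1 - p) * c₁) / m := by
        apply div_nonneg _ hm0.le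
        have : 0 ≤ 1 - p := by linarith
        positivity
      refine ⟨fun i => if i = 0 then A else B, fun i => ?_, ?_, ?_⟩
      · dsimp only; split
        · exact Real.rpow_nonneg hpc _
        · exact Real.rpow_nonneg hqc _
      · have hsum : ∀ C D : ℝ, (∑ i : Fin n, (if i = 0 then C else D)) = C + m * D := by
          intro C D
          rw [← Finset.add_sum_erase _ _ (Finset.mem_univ (0 : Fin n))]
          simp only [if_pos rfl]
          congr 1
          rw [Finset.sum_congr rfl (fun i hi => if_neg (Finset.ne_of_mem_erase hi)),
            Finset.sum_const, Finset.card_erase_of_mem (Finset.mem_univ _),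
            Finset.card_univ, Fintype.card_fin, nsmul_eq_mul, hmdef]
          congr 1
          rw [Nat.cast_sub (by omega)]
          norm_num
        calc (∑ i : Fin n, (if i = 0 then A else B) ^ a₁)
            = ∑ i : Fin n, (if i = 0 then A ^ a₁ else B ^ a₁) := by
              refine Finset.sum_congr rfl fun i _ => ?_
              split <;> rfl
          _ = A ^ a₁ + m * B ^ a₁ := hsum _ _
          _ = p * c₁ + m * ((((1 - p) * c₁)) / m) := by
              rw [hAdef, hBdef, keyC _ hpc, keyC _ hqc]
          _ = c₁ := by field_simp; ring
      · have hsum : ∀ C D : ℝ, (∑ i : Fin n, (if i = 0 then C else D)) = C + m * D := by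
          intro C D
          rw [← Finset.add_sum_erase _ _ (Finset.mem_univ (0 : Fin n))]
          simp only [if_pos rfl]
          congr 1
          rw [Finset.sum_congr rfl (fun i hi => if_neg (Finset.ne_of_mem_erase hi)),
            Finset.sum_const, Finset.card_erase_of_mem (Finset.mem_univ _),
            Finset.card_univ, Fintype.card_fin, nsmul_eq_mul, hmdef]
          congr 1
          rw [Nat.cast_sub (by omega)]
          norm_num
        calc (∑ i : Fin n, (if i = 0 then A else B) ^ a₂)
            = ∑ i : Fin n, (if i = 0 then A ^ a₂ else B ^ a₂) := by
              refine Finset.sum_congr rfl fun i _ => ?_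
              split <;> rfl
          _ = A ^ a₂ + m * B ^ a₂ := hsum _ _
          _ = (p * c₁) ^ r + m * ((((1 - p) * c₁)) / m) ^ r := by
              rw [hAdef, hBdef, keyD _ hpc, keyD _ hqc]
          _ = g p := rfl
          _ = c₂ := hgp
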